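/- Let X be a locally compact flow space for G and γ > 0. For every y in Y_cyc := ℝ\X_cyc (the quotient of the compact-flow-line part with G-period ≤ γ by the flow), there is a compact neighborhood L of q⁻¹(y) in X_cyc such that the set {g ∈ G | g·q(L) ∩ q(L) ≠ ∅} is finite; i.e., the induced G-action on Y_cyc is proper. -/

import Mathlib

open Pointwise
open Filter

theorem per_nat {X : Type*} [AddAction ℝ X] {p : ℝ} {x : X} (h : p +ᵥ x = x) :
    ∀ n : ℕ, (n * p : ℝ) +ᵥ x = x := by
  intro n
  induction n with
  | zero => simpa using (zero_vadd ℝ x)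
  | succ n ih =>
    have e : ((n+1 : ℕ) * p : ℝ) = (n * p) + p := by push_cast; ring
    rw [e, add_vadd, h, ih]

theorem per_int {X : Type*} [AddAction ℝ X] {p : ℝ} {x : X} (h : p +ᵥ x = x) :
    ∀ k : ℤ, (k * p : ℝ) +ᵥ x = x := by
  intro k
  rcases k.eq_nat_or_neg with ⟨n, rfl | rfl⟩
  · exact_mod_cast per_nat h n
  · have hn := per_nat h n
    calc ((-(n:ℤ) : ℤ) * p : ℝ) +ᵥ x = ((-(n:ℤ) : ℤ) * p : ℝ) +ᵥ ((n * p : ℝ) +ᵥ x) := by rw [hn]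
    _ = (((-(n:ℤ) : ℤ) * p : ℝ) + (n * p : ℝ)) +ᵥ x := by rw [add_vadd]
    _ = x := by push_cast; rw [show (-(n:ℝ) * p + n * p) = 0 by ring, zero_vadd]

theorem iter_g {G X : Type*} [Group G] [MulAction G X] [AddAction ℝ X]
    (hcomm : ∀ (g : G) (t : ℝ) (x : X), t +ᵥ (g • x) = g • (t +ᵥ x))
    {g : G} {t : ℝ} {x : X} (h : t +ᵥ x = g • x) :
    ∀ n : ℕ, (n * t : ℝ) +ᵥ x = g ^ n • x := by
  intro n
  induction n with
  | zero => simpa using (zero_vadd ℝ x)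
  | succ n ih =>
    have e : ((n+1 : ℕ) * t : ℝ) = (n * t) + t := by push_cast; ring
    rw [e, add_vadd, h, hcomm, ih, ← mul_smul, ← pow_succ']

theorem filt_pigeon {α β : Type*} {F : Filter α} [F.NeBot] (f : α → β) {S : Set α}
    (hS : S ∈ F) {T : Set β} (hT : T.Finite) (hf : ∀ a ∈ S, f a ∈ T) :
    ∃ b, (F ⊓ Filter.principal (f ⁻¹' {b})).NeBot := by
  by_contra hc
  push_neg at hc
  have h1 : ∀ b, (f ⁻¹' {b})ᶜ ∈ F := by
    intro b
    have := hc b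
    rw [Filter.inf_principal_eq_bot] at this
    exact this
  have h2 : (⋂ b ∈ T, (f ⁻¹' {b})ᶜ) ∈ F := (Filter.biInter_mem hT).2 fun b _ => h1 b
  obtain ⟨a, haS, ha2⟩ := Filter.nonempty_of_mem (Filter.inter_mem hS h2)
  simp only [Set.mem_iInter, Set.mem_compl_iff, Set.mem_preimage, Set.mem_singleton_iff] at ha2
  exact ha2 (f a) (hf a haS) rfl

theorem filt_cluster {α : Type*} {F : Filter α} [F.NeBot] (u : α → ℝ) {S : Set α}
    (hS : S ∈ F) {A B : ℝ} (hu : ∀ a ∈ S, u a ∈ Set.Icc A B) :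
    ∃ t₀ ∈ Set.Icc A B, (F ⊓ Filter.comap u (nhds t₀)).NeBot := by
  have hle : Filter.map u F ≤ Filter.principal (Set.Icc A B) := by
    rw [Filter.le_principal_iff, Filter.mem_map]
    exact Filter.mem_of_superset hS hu
  obtain ⟨t₀, ht₀, hcl⟩ := isCompact_Icc.exists_clusterPt hle
  refine ⟨t₀, ht₀, ?_⟩
  have h : (Filter.map u F ⊓ nhds t₀).NeBot := by
    rw [ClusterPt] at hcl; rwa [inf_comm]
  rw [← Filter.push_pull] at h
  exact (Filter.map_neBot_iff u).1 h

theorem boost {G X : Type*} [Group G] [MulAction G X] [AddAction ℝ X]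
    (hcomm : ∀ (g : G) (t : ℝ) (x : X), t +ᵥ (g • x) = g • (t +ᵥ x))
    {γ : ℝ} (hγ : 0 < γ) {x : X} (hx : ∃ g : G, ∃ t : ℝ, 0 < t ∧ t ≤ γ ∧ t +ᵥ x = g • x) :
    ∃ t ∈ Set.Icc (γ/2) γ, ∃ g : G, t +ᵥ x = g • x := by
  obtain ⟨g, t₀, ht₀, htγ, hrel⟩ := hx
  by_cases hc : γ/2 ≤ t₀
  · exact ⟨t₀, ⟨hc, htγ⟩, g, hrel⟩
  · push_neg at hc
    set k : ℕ := ⌈γ / (2*t₀)⌉₊ with hk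
    have hpos : 0 < γ / (2*t₀) := by positivity
    have hk1 : γ / (2*t₀) ≤ k := Nat.le_ceil _
    have hk2 : (k:ℝ) < γ / (2*t₀) + 1 := Nat.ceil_lt_add_one hpos.le
    refine ⟨k * t₀, ⟨?_, ?_⟩, g ^ k, iter_g hcomm hrel k⟩
    · calc γ/2 = (γ / (2*t₀)) * t₀ := by field_simp
        _ ≤ k * t₀ := by nlinarith
    · have h2 : (k:ℝ) * t₀ < (γ / (2*t₀) + 1) * t₀ := by nlinarith
      have e : (γ / (2*t₀) + 1) * t₀ = γ/2 + t₀ := by field_simp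
      nlinarith

theorem nat_pigeon {β : Type*} {S : Set ℕ} (hS : S.Infinite) (f : ℕ → β)
    {T : Set β} (hT : T.Finite) (hf : ∀ n ∈ S, f n ∈ T) :
    ∃ b, {n ∈ S | f n = b}.Infinite := by
  by_contra hc
  push_neg at hc
  have hsub : S ⊆ ⋃ b ∈ T, {n ∈ S | f n = b} := by
    intro n hn
    exact Set.mem_biUnion (hf n hn) ⟨hn, rfl⟩
  exact hS ((hT.biUnion fun b _ => hc b).subset hsub)

theorem reduce_mod {X : Type*} [AddAction ℝ X] {p : ℝ} (hp : 0 < p) {x : X}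
    (hpx : p +ᵥ x = x) (u : ℝ) : ∃ r, 0 ≤ r ∧ r < p ∧ u +ᵥ x = r +ᵥ x := by
  refine ⟨Int.fract (u/p) * p, mul_nonneg (Int.fract_nonneg _) hp.le, ?_, ?_⟩
  · calc Int.fract (u/p) * p < 1 * p := mul_lt_mul_of_pos_right (Int.fract_lt_one _) hp
    _ = p := one_mul p
  · have he : u = Int.fract (u/p) * p + (⌊u/p⌋ : ℤ) * p := by
      rw [Int.fract]
      field_simp
      ring
    calc u +ᵥ x = (Int.fract (u/p) * p + (⌊u/p⌋ : ℤ) * p) +ᵥ x := by rw [← he]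
    _ = Int.fract (u/p) * p +ᵥ (((⌊u/p⌋ : ℤ) * p : ℝ) +ᵥ x) := by rw [add_vadd]
    _ = Int.fract (u/p) * p +ᵥ x := by rw [per_int hpx]

theorem Xcyc_closed {G X : Type*} [Group G] [MetricSpace X] [MulAction G X] [AddAction ℝ X]
    [LocallyCompactSpace X]
    (hiso : ∀ g : G, Isometry (fun x : X => g • x))
    (hproper : ∀ K : Set X, IsCompact K → {g : G | (K ∩ g • K).Nonempty}.Finite)
    (hflowcont : Continuous fun p : ℝ × X => p.1 +ᵥ p.2)
    (hcomm : ∀ (g : G) (t : ℝ) (x : X), t +ᵥ (g • x) = g • (t +ᵥ x))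
    {γ : ℝ} (hγ : 0 < γ) :
    IsClosed ({x : X | ∃ t : ℝ, 0 < t ∧ t +ᵥ x = x} ∩
      {x : X | ∃ g : G, ∃ t : ℝ, 0 < t ∧ t ≤ γ ∧ t +ᵥ x = g • x}) := by
  set Xc : Set X := {x : X | ∃ t : ℝ, 0 < t ∧ t +ᵥ x = x} ∩
      {x : X | ∃ g : G, ∃ t : ℝ, 0 < t ∧ t ≤ γ ∧ t +ᵥ x = g • x} with hXc
  -- choice functions
  have hdata : ∀ y : X, ∃ (tp : ℝ × ℝ) (g : G), y ∈ Xc →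
      tp.1 ∈ Set.Icc (γ/2) γ ∧ tp.1 +ᵥ y = g • y ∧ 0 < tp.2 ∧ tp.2 +ᵥ y = y := by
    intro y
    by_cases hy : y ∈ Xc
    · obtain ⟨⟨p, hp, hpy⟩, hgper⟩ := hy
      obtain ⟨t, htI, g, hrel⟩ := boost hcomm hγ hgper
      exact ⟨(t, p), g, fun _ => ⟨htI, hrel, hp, hpy⟩⟩
    · exact ⟨(0,0), 1, fun h => absurd h hy⟩
  choose tp gf hdata using hdata
  set t : X → ℝ := fun y => (tp y).1 with ht
  set p : X → ℝ := fun y => (tp y).2 with hp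
  rw [isClosed_iff_clusterPt]
  intro x hx
  set F : Filter X := nhds x ⊓ Filter.principal Xc with hF
  haveI hFne : F.NeBot := hx
  have hFnx : F ≤ nhds x := inf_le_left
  have hXcF : Xc ∈ F := Filter.mem_inf_of_right (Filter.mem_principal_self Xc)
  obtain ⟨K, hKc, hKn⟩ := exists_compact_mem_nhds x
  have hKF : K ∈ F := Filter.mem_inf_of_left hKn
  set A₀ : Set X := Xc ∩ K with hA₀
  have hA₀F : A₀ ∈ F := Filter.inter_mem hXcF hKF
  set C : Set X := (fun q : ℝ × X => q.1 +ᵥ q.2) '' (Set.Icc (-γ) γ ×ˢ K) with hC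
  have hCc : IsCompact C := (isCompact_Icc.prod hKc).image hflowcont
  have hCmem : ∀ u : ℝ, u ∈ Set.Icc (-γ) γ → ∀ y ∈ K, u +ᵥ y ∈ C := by
    intro u hu y hy
    exact ⟨(u, y), ⟨hu, hy⟩, rfl⟩
  have hKC : K ⊆ C := by
    intro y hy
    have := hCmem 0 ⟨by linarith, hγ.le⟩ y hy
    rwa [zero_vadd] at this
  set T : Set G := {g : G | (C ∩ g • C).Nonempty} with hT
  have hTfin : T.Finite := hproper C hCc
  -- facts on A₀
  have hdat : ∀ y ∈ A₀, t y ∈ Set.Icc (γ/2) γ ∧ t y +ᵥ y = gf y • y ∧ 0 < p y ∧ p y +ᵥ y = y :=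
    fun y hy => hdata y hy.1
  have htpos : ∀ y ∈ A₀, 0 < t y := fun y hy => lt_of_lt_of_le (half_pos hγ) (hdat y hy).1.1
  -- extract t cluster
  obtain ⟨t₀, ht₀I, hF₁⟩ := filt_cluster (F := F) t hA₀F (fun y hy => (hdat y hy).1)
  set F₁ := F ⊓ Filter.comap t (nhds t₀) with hF₁d
  haveI := hF₁
  have hA₀F₁ : A₀ ∈ F₁ := Filter.mem_inf_of_left hA₀F
  -- extract constant g
  have hgT : ∀ y ∈ A₀, gf y ∈ T := by
    intro y hy
    refine ⟨gf y • y, ?_, ?_⟩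
    · rw [← (hdat y hy).2.1]
      exact hCmem (t y) ⟨by have := (hdat y hy).1.1; linarith, (hdat y hy).1.2⟩ y hy.2
    · exact Set.smul_mem_smul_set (hKC hy.2)
  obtain ⟨g₀, hF₂⟩ := filt_pigeon (F := F₁) gf hA₀F₁ hTfin hgT
  set F₂ := F₁ ⊓ Filter.principal (gf ⁻¹' {g₀}) with hF₂d
  haveI := hF₂
  have hF₂F : F₂ ≤ F := le_trans inf_le_left inf_le_left
  have hA₀F₂ : A₀ ∈ F₂ := hF₂F hA₀F
  have hgfib : gf ⁻¹' {g₀} ∈ F₂ := Filter.mem_inf_of_right (Filter.mem_principal_self _)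
  -- limit : t₀ +ᵥ x = g₀ • x
  have hidF₂ : Filter.Tendsto id F₂ (nhds x) := hF₂F.trans hFnx
  have htF₂ : Filter.Tendsto t F₂ (nhds t₀) :=
    Filter.tendsto_comap.mono_left (le_trans inf_le_left inf_le_right)
  have hflowlim : Filter.Tendsto (fun y => t y +ᵥ y) F₂ (nhds (t₀ +ᵥ x)) :=
    (hflowcont.tendsto (t₀, x)).comp (htF₂.prodMk_nhds hidF₂)
  have hglim : Filter.Tendsto (fun y => g₀ • y) F₂ (nhds (g₀ • x)) :=
    ((hiso g₀).continuous.tendsto x).comp hidF₂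
  have hev : ∀ᶠ y in F₂, (fun y => t y +ᵥ y) y = (fun y => g₀ • y) y := by
    filter_upwards [hA₀F₂, hgfib] with y hy hgy
    simp only [Set.mem_preimage, Set.mem_singleton_iff] at hgy
    rw [(hdat y hy).2.1, hgy]
  have hgx : t₀ +ᵥ x = g₀ • x :=
    tendsto_nhds_unique (hflowlim.congr' hev) hglim
  have ht₀pos : 0 < t₀ := lt_of_lt_of_le (half_pos hγ) ht₀I.1
  refine ⟨?_, ⟨g₀, t₀, ht₀pos, ht₀I.2, hgx⟩⟩
  -- part (a) : a flow period for x
  set m : X → ℕ := fun y => ⌊p y / t y⌋₊ with hm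
  set s : X → ℝ := fun y => p y - m y * t y with hs
  set A₁ : Set X := A₀ ∩ gf ⁻¹' {g₀} with hA₁
  have hA₁F₂ : A₁ ∈ F₂ := Filter.inter_mem hA₀F₂ hgfib
  have hsIcc : ∀ y ∈ A₀, s y ∈ Set.Icc 0 γ := by
    intro y hy
    have h1 : 0 < t y := htpos y hy
    have h2 : 0 < p y := (hdat y hy).2.2.1
    have h3 : (m y : ℝ) ≤ p y / t y := Nat.floor_le (by positivity)
    have h4 : p y / t y < m y + 1 := Nat.lt_floor_add_one _
    constructor
    · have : (m y : ℝ) * t y ≤ p y := by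
        calc (m y : ℝ) * t y ≤ (p y / t y) * t y := by nlinarith
        _ = p y := by field_simp
      simp only [hs]; linarith
    · have : p y < (m y + 1) * t y := by
        calc p y = (p y / t y) * t y := by field_simp
        _ < (m y + 1) * t y := by nlinarith
      have h5 : t y ≤ γ := (hdat y hy).1.2
      simp only [hs]; nlinarith
  have hrel2 : ∀ y ∈ A₁, g₀ ^ m y • y = (-(s y)) +ᵥ y := by
    intro y hy
    have hgy : gf y = g₀ := hy.2
    have hrel : t y +ᵥ y = g₀ • y := by rw [← hgy]; exact (hdat y hy.1).2.1
    have := iter_g hcomm hrel (m y)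
    rw [← this]
    have hper : p y +ᵥ y = y := (hdat y hy.1).2.2.2
    calc ((m y : ℝ) * t y) +ᵥ y = (-(s y) + p y) +ᵥ y := by
          congr 1; simp only [hs]; ring
    _ = (-(s y)) +ᵥ (p y +ᵥ y) := by rw [add_vadd]
    _ = (-(s y)) +ᵥ y := by rw [hper]
  have hhT : ∀ y ∈ A₁, g₀ ^ m y ∈ T := by
    intro y hy
    refine ⟨g₀ ^ m y • y, ?_, Set.smul_mem_smul_set (hKC hy.1.2)⟩
    rw [hrel2 y hy]
    have hsy := hsIcc y hy.1
    exact hCmem _ ⟨by linarith [hsy.2], by linarith [hsy.1]⟩ y hy.1.2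
  obtain ⟨h, hF₃⟩ := filt_pigeon (F := F₂) (fun y => g₀ ^ m y) hA₁F₂ hTfin hhT
  set F₃ := F₂ ⊓ Filter.principal ((fun y => g₀ ^ m y) ⁻¹' {h}) with hF₃d
  haveI := hF₃
  have hF₃F₂ : F₃ ≤ F₂ := inf_le_left
  have hA₁F₃ : A₁ ∈ F₃ := hF₃F₂ hA₁F₂
  have hhfib : (fun y => g₀ ^ m y) ⁻¹' {h} ∈ F₃ := Filter.mem_inf_of_right (Filter.mem_principal_self _)
  obtain ⟨s₀, hs₀I, hF₄⟩ := filt_cluster (F := F₃) s (hF₃F₂ hA₀F₂)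
    (fun y hy => hsIcc y hy)
  set F₄ := F₃ ⊓ Filter.comap s (nhds s₀) with hF₄d
  haveI := hF₄
  have hF₄F₂ : F₄ ≤ F₂ := le_trans inf_le_left hF₃F₂
  have hidF₄ : Filter.Tendsto id F₄ (nhds x) := (hF₄F₂.trans hF₂F).trans hFnx
  have hsF₄ : Filter.Tendsto s F₄ (nhds s₀) :=
    Filter.tendsto_comap.mono_left inf_le_right
  set B : Set X := A₁ ∩ (fun y => g₀ ^ m y) ⁻¹' {h} with hB
  have hBF₄ : B ∈ F₄ := by
    apply Filter.inter_mem
    · exact (inf_le_left : F₄ ≤ F₃) hA₁F₃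
    · exact (inf_le_left : F₄ ≤ F₃) hhfib
  have hBne : B.Nonempty := Filter.nonempty_of_mem hBF₄
  -- limit : h • x = -s₀ +ᵥ x
  have hhlim : Filter.Tendsto (fun y => h • y) F₄ (nhds (h • x)) :=
    ((hiso h).continuous.tendsto x).comp hidF₄
  have hmlim : Filter.Tendsto (fun y => (-(s y)) +ᵥ y) F₄ (nhds ((-s₀) +ᵥ x)) :=
    (hflowcont.tendsto ((-s₀), x)).comp ((hsF₄.neg).prodMk_nhds hidF₄)
  have hev2 : ∀ᶠ y in F₄, (fun y => h • y) y = (fun y => (-(s y)) +ᵥ y) y := by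
    filter_upwards [hBF₄] with y hy
    have : g₀ ^ m y = h := hy.2
    rw [← this, hrel2 y hy.1]
  have hhx : h • x = (-s₀) +ᵥ x :=
    tendsto_nhds_unique (hhlim.congr' hev2) hmlim
  by_cases hcase : ∃ y ∈ B, 0 < (m y : ℝ) * t₀ + s₀
  · obtain ⟨y, hyB, hypos⟩ := hcase
    have hhy : g₀ ^ m y = h := hyB.2
    have h1 : ((m y : ℝ) * t₀) +ᵥ x = h • x := by
      rw [← hhy]; exact iter_g hcomm hgx (m y)
    refine ⟨s₀ + m y * t₀, by linarith, ?_⟩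
    calc (s₀ + (m y : ℝ) * t₀) +ᵥ x = s₀ +ᵥ (((m y : ℝ) * t₀) +ᵥ x) := by rw [add_vadd]
    _ = s₀ +ᵥ ((-s₀) +ᵥ x) := by rw [h1, hhx]
    _ = (s₀ + -s₀) +ᵥ x := by rw [add_vadd]
    _ = x := by rw [add_neg_cancel, zero_vadd]
  · push_neg at hcase
    have hs₀0 : s₀ = 0 := by
      obtain ⟨y, hyB⟩ := hBne
      have := hcase y hyB
      have hm0 : (0:ℝ) ≤ (m y : ℝ) * t₀ := by positivity
      linarith [hs₀I.1]
    have hmall : ∀ y ∈ B, (m y : ℝ) = 0 := by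
      intro y hy
      have := hcase y hy
      rw [hs₀0] at this
      have hm0 : (0:ℝ) ≤ (m y : ℝ) * t₀ := by positivity
      have : (m y : ℝ) * t₀ = 0 := le_antisymm (by linarith) hm0
      exact (mul_eq_zero.1 this).resolve_right (by linarith)
    -- p tends to 0 along F₄
    have hps : ∀ᶠ y in F₄, p y = s y := by
      filter_upwards [hBF₄] with y hy
      simp only [hs]
      rw [hmall y hy]; ring
    have hplim : Filter.Tendsto p F₄ (nhds 0) := by
      rw [← hs₀0]
      exact hsF₄.congr' (by filter_upwards [hps] with y hy using hy.symm)
    -- flow-fixed argument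
    set r : X → ℝ := fun y => 1 - ⌊1 / p y⌋₊ * p y with hr
    have hrbound : ∀ y ∈ A₀, 0 ≤ r y ∧ r y ≤ p y := by
      intro y hy
      have hpy : 0 < p y := (hdat y hy).2.2.1
      have h3 : (⌊1 / p y⌋₊ : ℝ) ≤ 1 / p y := Nat.floor_le (by positivity)
      have h4 : 1 / p y < ⌊1 / p y⌋₊ + 1 := Nat.lt_floor_add_one _
      constructor
      · have : (⌊1 / p y⌋₊ : ℝ) * p y ≤ (1 / p y) * p y := by nlinarith
        have e : (1 / p y) * p y = 1 := by field_simp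
        simp only [hr]; nlinarith
      · have : 1 < (⌊1 / p y⌋₊ + 1 : ℝ) * p y := by
          calc (1:ℝ) = (1 / p y) * p y := by field_simp
          _ < (⌊1 / p y⌋₊ + 1 : ℝ) * p y := by nlinarith
        simp only [hr]; nlinarith
    have hA₀F₄ : A₀ ∈ F₄ := hF₄F₂ hA₀F₂
    have hrlim : Filter.Tendsto r F₄ (nhds 0) := by
      apply squeeze_zero' (by filter_upwards [hA₀F₄] with y hy using (hrbound y hy).1)
        (by filter_upwards [hA₀F₄] with y hy using (hrbound y hy).2) hplim
    have hone : ∀ y ∈ A₀, (1:ℝ) +ᵥ y = r y +ᵥ y := by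
      intro y hy
      have hper : p y +ᵥ y = y := (hdat y hy).2.2.2
      calc (1:ℝ) +ᵥ y = (r y + ⌊1 / p y⌋₊ * p y) +ᵥ y := by congr 1; simp only [hr]; ring
      _ = r y +ᵥ (((⌊1 / p y⌋₊ : ℕ) * p y : ℝ) +ᵥ y) := by rw [add_vadd]
      _ = r y +ᵥ y := by rw [per_nat hper]
    have honelim : Filter.Tendsto (fun y => (1:ℝ) +ᵥ y) F₄ (nhds ((1:ℝ) +ᵥ x)) :=
      (hflowcont.tendsto ((1:ℝ), x)).comp (tendsto_const_nhds.prodMk_nhds hidF₄)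
    have hrvlim : Filter.Tendsto (fun y => r y +ᵥ y) F₄ (nhds x) := by
      have := (hflowcont.tendsto ((0:ℝ), x)).comp (hrlim.prodMk_nhds hidF₄)
      rwa [zero_vadd] at this
    have h1x : (1:ℝ) +ᵥ x = x := by
      apply tendsto_nhds_unique _ hrvlim
      exact honelim.congr' (by filter_upwards [hA₀F₄] with y hy using (hone y hy))
    exact ⟨1, one_pos, h1x⟩

theorem period_bound {G X : Type*} [Group G] [MetricSpace X] [MulAction G X] [AddAction ℝ X]
    (hproper : ∀ K : Set X, IsCompact K → {g : G | (K ∩ g • K).Nonempty}.Finite)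
    (hflowcont : Continuous fun p : ℝ × X => p.1 +ᵥ p.2)
    (hcomm : ∀ (g : G) (t : ℝ) (x : X), t +ᵥ (g • x) = g • (t +ᵥ x))
    {γ : ℝ} (hγ : 0 < γ) {L : Set X} (hLc : IsCompact L)
    (hL : ∀ x ∈ L, (∃ p : ℝ, 0 < p ∧ p +ᵥ x = x) ∧
      (∃ g : G, ∃ u : ℝ, 0 < u ∧ u ≤ γ ∧ u +ᵥ x = g • x)) :
    ∃ P : ℝ, 0 < P ∧ ∀ x ∈ L, ∃ p : ℝ, 0 < p ∧ p ≤ P ∧ p +ᵥ x = x := by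
  by_contra hc
  push_neg at hc
  -- for every n pick a point with no period ≤ n+1
  have hex : ∀ n : ℕ, ∃ x ∈ L, ∀ p : ℝ, 0 < p → p ≤ (n:ℝ)+1 → p +ᵥ x ≠ x := by
    intro n
    obtain ⟨x, hxL, hx⟩ := hc ((n:ℝ)+1) (by positivity)
    exact ⟨x, hxL, fun p h1 h2 h3 => (hx p h1 h2) h3⟩
  choose xn hxnL hno using hex
  -- data for each n
  have hdat : ∀ n : ℕ, ∃ tg : ℝ × G, tg.1 ∈ Set.Icc (γ/2) γ ∧ tg.1 +ᵥ xn n = tg.2 • xn n := by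
    intro n
    obtain ⟨t, htI, g, hrel⟩ := boost hcomm hγ (hL (xn n) (hxnL n)).2
    exact ⟨(t, g), htI, hrel⟩
  choose tg htgI htgrel using hdat
  set t : ℕ → ℝ := fun n => (tg n).1 with htdef
  set gg : ℕ → G := fun n => (tg n).2 with hggdef
  have htpos : ∀ n, 0 < t n := fun n => lt_of_lt_of_le (half_pos hγ) (htgI n).1
  have hpn : ∀ n : ℕ, ∃ p : ℝ, 0 < p ∧ p +ᵥ xn n = xn n := fun n => (hL (xn n) (hxnL n)).1
  choose p hppos hpper using hpn
  have hpbig : ∀ n : ℕ, (n:ℝ)+1 < p n := by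
    intro n
    by_contra hle
    push_neg at hle
    exact hno n (p n) (hppos n) hle (hpper n)
  set C : Set X := (fun q : ℝ × X => q.1 +ᵥ q.2) '' (Set.Icc (-γ) γ ×ˢ L) with hC
  have hCc : IsCompact C := (isCompact_Icc.prod hLc).image hflowcont
  have hCmem : ∀ u : ℝ, u ∈ Set.Icc (-γ) γ → ∀ y ∈ L, u +ᵥ y ∈ C :=
    fun u hu y hy => ⟨(u, y), ⟨hu, hy⟩, rfl⟩
  have hLC : L ⊆ C := by
    intro y hy
    have := hCmem 0 ⟨by linarith, hγ.le⟩ y hy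
    rwa [zero_vadd] at this
  set T : Set G := {g : G | (C ∩ g • C).Nonempty} with hT
  have hTfin : T.Finite := hproper C hCc
  -- constant g on an infinite set
  have hgT : ∀ n : ℕ, n ∈ (Set.univ : Set ℕ) → gg n ∈ T := by
    intro n _
    refine ⟨gg n • xn n, ?_, Set.smul_mem_smul_set (hLC (hxnL n))⟩
    rw [← htgrel n]
    exact hCmem (t n) ⟨by have := (htgI n).1; linarith, (htgI n).2⟩ _ (hxnL n)
  obtain ⟨g, hIinf⟩ := nat_pigeon Set.infinite_univ gg hTfin hgT
  set I : Set ℕ := {n ∈ Set.univ | gg n = g} with hI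
  -- powers of g
  set m : ℕ → ℕ := fun n => ⌊p n / t n⌋₊ with hm
  set s : ℕ → ℝ := fun n => p n - m n * t n with hs
  have hsI : ∀ n : ℕ, 0 ≤ s n ∧ s n ≤ γ := by
    intro n
    have h1 : 0 < t n := htpos n
    have h2 : 0 < p n := hppos n
    have h3 : (m n : ℝ) ≤ p n / t n := Nat.floor_le (by positivity)
    have h4 : p n / t n < m n + 1 := Nat.lt_floor_add_one _
    have h5 : t n ≤ γ := (htgI n).2
    constructor
    · have : (m n : ℝ) * t n ≤ (p n / t n) * t n := by nlinarith
      have e : (p n / t n) * t n = p n := by field_simp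
      simp only [hs]; nlinarith
    · have : p n < (m n + 1) * t n := by
        calc p n = (p n / t n) * t n := by field_simp
        _ < (m n + 1) * t n := by nlinarith
      simp only [hs]; nlinarith
  have hrel2 : ∀ n ∈ I, g ^ m n • xn n = (-(s n)) +ᵥ xn n := by
    intro n hn
    have hgn : gg n = g := hn.2
    have hrel : t n +ᵥ xn n = g • xn n := by rw [← hgn]; exact htgrel n
    rw [← iter_g hcomm hrel (m n)]
    calc ((m n : ℝ) * t n) +ᵥ xn n = (-(s n) + p n) +ᵥ xn n := by
          congr 1; simp only [hs]; ring
    _ = (-(s n)) +ᵥ (p n +ᵥ xn n) := by rw [add_vadd]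
    _ = (-(s n)) +ᵥ xn n := by rw [hpper n]
  have hhT : ∀ n ∈ I, g ^ m n ∈ T := by
    intro n hn
    refine ⟨g ^ m n • xn n, ?_, Set.smul_mem_smul_set (hLC (hxnL n))⟩
    rw [hrel2 n hn]
    exact hCmem _ ⟨by linarith [(hsI n).2], by linarith [(hsI n).1]⟩ _ (hxnL n)
  obtain ⟨h, hJinf⟩ := nat_pigeon hIinf (fun n => g ^ m n) hTfin hhT
  set J : Set ℕ := {n ∈ I | g ^ m n = h} with hJ
  -- m grows
  have hmgrow : ∀ n : ℕ, ((n:ℝ)+1)/γ - 1 < m n := by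
    intro n
    have h1 : 0 < t n := htpos n
    have h5 : t n ≤ γ := (htgI n).2
    have h6 : ((n:ℝ)+1)/γ ≤ p n / t n := by
      rw [div_le_div_iff₀ hγ h1]; nlinarith [(hpbig n)]
    have h7 : p n / t n - 1 < ⌊p n / t n⌋₊ := Nat.sub_one_lt_floor _
    simp only [hm]
    linarith
  -- find g^d = 1
  obtain ⟨n₁, hn₁J⟩ := hJinf.nonempty
  obtain ⟨n₂, hn₂J, hn₂big⟩ := hJinf.exists_gt (⌈γ * (m n₁ + 1)⌉₊)
  have hm₂ : (m n₁ : ℕ) < m n₂ := by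
    have h1 : γ * ((m n₁ : ℝ) + 1) ≤ (⌈γ * (m n₁ + 1)⌉₊ : ℝ) := Nat.le_ceil _
    have h2 : ((⌈γ * (m n₁ + 1)⌉₊ : ℕ) : ℝ) < n₂ := by exact_mod_cast hn₂big
    have h3 : ((n₂:ℝ)+1)/γ - 1 < m n₂ := hmgrow n₂
    have h4 : (m n₁ : ℝ) + 1 ≤ ((n₂:ℝ)+1)/γ := by
      rw [le_div_iff₀ hγ]
      nlinarith
    have : (m n₁ : ℝ) < m n₂ := by linarith
    exact_mod_cast this
  have hgd : g ^ (m n₂ - m n₁) = 1 := by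
    have he : g ^ m n₂ = g ^ m n₁ := by rw [hn₂J.2, hn₁J.2]
    have : g ^ (m n₂ - m n₁) * g ^ m n₁ = g ^ m n₁ := by
      rw [← pow_add, Nat.sub_add_cancel hm₂.le, he]
    exact mul_right_cancel (this.trans (one_mul _).symm)
  set d : ℕ := m n₂ - m n₁ with hd
  have hdpos : 0 < d := Nat.sub_pos_of_lt hm₂
  -- contradiction at a large index
  obtain ⟨n₃, hn₃I, hn₃big⟩ := hIinf.exists_gt (⌈(d:ℝ) * γ⌉₊)
  have hgn₃ : gg n₃ = g := hn₃I.2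
  have hrel₃ : t n₃ +ᵥ xn n₃ = g • xn n₃ := by rw [← hgn₃]; exact htgrel n₃
  have hper₃ : ((d:ℝ) * t n₃) +ᵥ xn n₃ = xn n₃ := by
    rw [iter_g hcomm hrel₃ d, hgd, one_smul]
  have hqpos : 0 < (d:ℝ) * t n₃ := by
    have := htpos n₃
    have : (0:ℝ) < d := by exact_mod_cast hdpos
    positivity
  have hqle : (d:ℝ) * t n₃ ≤ (n₃:ℝ) + 1 := by
    have h5 : t n₃ ≤ γ := (htgI n₃).2
    have h1 : (d:ℝ) * γ ≤ ⌈(d:ℝ) * γ⌉₊ := Nat.le_ceil _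
    have h2 : ((⌈(d:ℝ) * γ⌉₊ : ℕ) : ℝ) < n₃ := by exact_mod_cast hn₃big
    have hd0 : (0:ℝ) ≤ d := by positivity
    nlinarith
  exact hno n₃ _ hqpos hqle hper₃

theorem stmt17 {G X : Type*} [Group G] [MetricSpace X] [MulAction G X] [AddAction ℝ X]
    [LocallyCompactSpace X]
    (hiso : ∀ g : G, Isometry (fun x : X => g • x))
    (hproper : ∀ K : Set X, IsCompact K → {g : G | (K ∩ g • K).Nonempty}.Finite)
    (hflowcont : Continuous fun p : ℝ × X => p.1 +ᵥ p.2)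
    (hcomm : ∀ (g : G) (t : ℝ) (x : X), t +ᵥ (g • x) = g • (t +ᵥ x))
    (γ : ℝ) (hγ : 0 < γ)
    (Xcyc : Set X)
    (hXcyc : Xcyc = {x : X | ∃ t : ℝ, 0 < t ∧ t +ᵥ x = x} ∩
      {x : X | ∃ g : G, ∃ t : ℝ, 0 < t ∧ t ≤ γ ∧ t +ᵥ x = g • x}) :
    ∀ c ∈ Xcyc, ∃ L : Set X, IsCompact L ∧ L ⊆ Xcyc ∧
      -- L is a neighborhood within X_cyc of the flow line q⁻¹(y) through c
      (∃ O : Set X, IsOpen O ∧ (Set.range fun t : ℝ => t +ᵥ c) ⊆ O ∧ O ∩ Xcyc ⊆ L) ∧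
      -- the set {g | g·q(L) ∩ q(L) ≠ ∅} is finite
      {g : G | ∃ x ∈ L, ∃ t : ℝ, t +ᵥ (g • x) ∈ L}.Finite := by
  intro c hc
  have hXclosed : IsClosed Xcyc := by
    rw [hXcyc]; exact Xcyc_closed hiso hproper hflowcont hcomm hγ
  obtain ⟨⟨pc, hpc, hpcper⟩, hgper⟩ : (∃ t : ℝ, 0 < t ∧ t +ᵥ c = c) ∧
      (∃ g : G, ∃ t : ℝ, 0 < t ∧ t ≤ γ ∧ t +ᵥ c = g • c) := by rwa [hXcyc] at hc
  -- the flow line through c is compact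
  set Fc : Set X := (fun q : ℝ × X => q.1 +ᵥ q.2) '' (Set.Icc 0 pc ×ˢ {c}) with hFc
  have hFcc : IsCompact Fc := (isCompact_Icc.prod isCompact_singleton).image hflowcont
  have hrange : (Set.range fun t : ℝ => t +ᵥ c) ⊆ Fc := by
    rintro _ ⟨u, rfl⟩
    obtain ⟨r, hr0, hrp, hrc⟩ := reduce_mod hpc hpcper u
    exact ⟨(r, c), ⟨⟨hr0, hrp.le⟩, rfl⟩, hrc.symm⟩
  obtain ⟨K', hK'c, hK'int⟩ := exists_compact_superset hFcc
  refine ⟨K' ∩ Xcyc, hK'c.inter_right hXclosed, Set.inter_subset_right, ?_, ?_⟩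
  · exact ⟨interior K', isOpen_interior, hrange.trans hK'int,
      Set.inter_subset_inter_left _ interior_subset⟩
  · -- finiteness
    set L : Set X := K' ∩ Xcyc with hL
    have hLc : IsCompact L := hK'c.inter_right hXclosed
    have hLd : ∀ x ∈ L, (∃ p : ℝ, 0 < p ∧ p +ᵥ x = x) ∧
        (∃ g : G, ∃ u : ℝ, 0 < u ∧ u ≤ γ ∧ u +ᵥ x = g • x) := by
      intro x hx
      have := hx.2
      rw [hXcyc] at this
      exact this
    obtain ⟨P, hPpos, hPbound⟩ := period_bound hproper hflowcont hcomm hγ hLc hLd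
    set M : Set X := (fun q : ℝ × X => q.1 +ᵥ q.2) '' (Set.Icc 0 P ×ˢ L) with hM
    have hMc : IsCompact M := (isCompact_Icc.prod hLc).image hflowcont
    have hMmem : ∀ x ∈ L, ∀ u : ℝ, u +ᵥ x ∈ M := by
      intro x hx u
      obtain ⟨p, hp0, hpP, hper⟩ := hPbound x hx
      obtain ⟨r, hr0, hrp, hrc⟩ := reduce_mod hp0 hper u
      exact hrc ▸ ⟨(r, x), ⟨⟨hr0, hrp.le.trans hpP⟩, hx⟩, rfl⟩
    set N : Set X := L ∪ M with hN
    have hNc : IsCompact N := hLc.union hMc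
    apply (hproper N hNc).subset
    rintro g ⟨x, hxL, u, hu⟩
    refine ⟨u +ᵥ g • x, Or.inl hu, ?_⟩
    rw [hcomm]
    exact Set.smul_mem_smul_set (Or.inr (hMmem x hxL u))
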